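/- A differentiable map h : U → M₄(ℝ) (U = ℝ² × (0,π) × ℝ with coordinates (t,r,θ,φ)) satisfies (L_{X_I} h)^a_μ = f_I^î (λ̂_î)^a_b h^b_μ for the three spherical symmetry generators X₁, X₂, X₃ with the spherically symmetric symmetry functions f_I^î if and only if there exist functions A₁,…,A₆ of (t,r) alone such that the rows of h are h^1 = (A₁, A₂, 0, 0), h^2 = (A₃, A₄, 0, 0), h^3 = (0, 0, A₅, −A₆ sinθ), h^4 = (0, 0, A₆, A₅ sinθ). -/

import Mathlib

open Real

/-- Partial derivative of a scalar function on ℝ⁴ in the μ-th coordinate direction. -/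
noncomputable def pd (f : (Fin 4 → ℝ) → ℝ) (μ : Fin 4) (p : Fin 4 → ℝ) : ℝ :=
  fderiv ℝ f p (Pi.single μ 1)

/-- U = ℝ² × (0,π) × ℝ in coordinates (t,r,θ,φ). -/
def Usph : Set (Fin 4 → ℝ) := {p | 0 < p 2 ∧ p 2 < Real.pi}

/-- The spherical symmetry generators X₁, X₂, X₃. -/
noncomputable def Xsph : Fin 3 → (Fin 4 → ℝ) → Fin 4 → ℝ :=
  ![fun p => ![0, 0, Real.sin (p 3), Real.cos (p 3) / Real.tan (p 2)],
    fun p => ![0, 0, -Real.cos (p 3), Real.sin (p 3) / Real.tan (p 2)],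
    fun _ => ![0, 0, 0, 1]]

/-- The isotropy matrices λ̂₁, λ̂₂, λ̂₃. -/
def lamIso : Fin 3 → Matrix (Fin 4) (Fin 4) ℝ :=
  ![!![0,0,0,0; 0,0,0,0; 0,0,0,1; 0,0,-1,0],
    !![0,0,0,0; 0,0,-1,0; 0,1,0,0; 0,0,0,0],
    !![0,0,0,0; 0,0,0,-1; 0,0,0,0; 0,1,0,0]]

/-- The spherically symmetric symmetry functions. -/
noncomputable def fsph : Fin 3 → Fin 3 → (Fin 4 → ℝ) → ℝ :=
  fun I i p =>
    if I = 0 ∧ i = 0 then Real.cos (p 3) / Real.sin (p 2)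
    else if I = 1 ∧ i = 0 then Real.sin (p 3) / Real.sin (p 2)
    else 0

/-! ### auxiliary lemmas -/

lemma usph_open : IsOpen Usph := by
  have : Usph = (fun p : Fin 4 → ℝ => p 2) ⁻¹' (Set.Ioo 0 Real.pi) := by
    ext p; simp [Usph, Set.mem_Ioo]
  rw [this]
  exact isOpen_Ioo.preimage (continuous_apply 2)

lemma usph_nhds {p : Fin 4 → ℝ} (hp : p ∈ Usph) : Usph ∈ nhds p :=
  usph_open.mem_nhds hp

lemma sin2_ne {p : Fin 4 → ℝ} (hp : p ∈ Usph) : Real.sin (p 2) ≠ 0 :=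
  (Real.sin_pos_of_pos_of_lt_pi hp.1 hp.2).ne'

lemma update3_mem {p : Fin 4 → ℝ} (hp : p ∈ Usph) (s : ℝ) : Function.update p 3 s ∈ Usph := by
  simpa [Usph, Function.update_of_ne (show (2:Fin 4) ≠ 3 by decide)] using hp

lemma update2_mem (p : Fin 4 → ℝ) {s : ℝ} (hs1 : 0 < s) (hs2 : s < Real.pi) :
    Function.update p 2 s ∈ Usph := by
  simp [Usph, Function.update_self]; exact ⟨hs1, hs2⟩

lemma pd_congr {f g : (Fin 4 → ℝ) → ℝ} {p : Fin 4 → ℝ} (μ : Fin 4)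
    (hfg : f =ᶠ[nhds p] g) : pd f μ p = pd g μ p := by
  unfold pd; rw [hfg.fderiv_eq]

lemma pd_const (c : ℝ) (μ : Fin 4) (p : Fin 4 → ℝ) : pd (fun _ => c) μ p = 0 := by
  unfold pd; simp

lemma hasDerivAt_comp_update {f : (Fin 4 → ℝ) → ℝ} {p : Fin 4 → ℝ} {μ : Fin 4} {s : ℝ}
    (hf : DifferentiableAt ℝ f (Function.update p μ s)) :
    HasDerivAt (fun t => f (Function.update p μ t)) (pd f μ (Function.update p μ s)) s :=
  hf.hasFDerivAt.comp_hasDerivAt s (hasDerivAt_update p μ s)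

lemma pd_eq_deriv {f : (Fin 4 → ℝ) → ℝ} {p : Fin 4 → ℝ} {μ : Fin 4}
    (hf : DifferentiableAt ℝ f p) :
    pd f μ p = deriv (fun s => f (Function.update p μ s)) (p μ) := by
  have h1 : HasDerivAt (fun t => f (Function.update p μ t)) (pd f μ p) (p μ) := by
    have := hasDerivAt_comp_update (f := f) (p := p) (μ := μ) (s := p μ)
      (by simpa using hf)
    simpa using this
  exact h1.deriv.symm

lemma const_of_deriv_zero_Ioo {f : ℝ → ℝ} {a b x y : ℝ}
    (hf : ∀ z ∈ Set.Ioo a b, DifferentiableAt ℝ f z)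
    (hd : ∀ z ∈ Set.Ioo a b, deriv f z = 0)
    (hx : x ∈ Set.Ioo a b) (hy : y ∈ Set.Ioo a b) : f x = f y := by
  wlog hxy : x ≤ y generalizing x y
  · exact (this hy hx (le_of_not_ge hxy)).symm
  have hsub : Set.Icc x y ⊆ Set.Ioo a b := fun z hz =>
    ⟨lt_of_lt_of_le hx.1 hz.1, lt_of_le_of_lt hz.2 hy.2⟩
  have := constant_of_derivWithin_zero (f := f) (a := x) (b := y)
    (fun z hz => (hf z (hsub hz)).differentiableWithinAt)
    (fun z hz => by
      rw [(hf z (hsub (Set.Ico_subset_Icc_self hz))).derivWithin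
        (uniqueDiffOn_Icc (lt_of_le_of_lt hz.1 hz.2) z (Set.Ico_subset_Icc_self hz))]
      exact hd z (hsub (Set.Ico_subset_Icc_self hz)))
  exact (this y (Set.right_mem_Icc.2 hxy)).symm

lemma diffAt_proj (i : Fin 4) (p : Fin 4 → ℝ) :
    DifferentiableAt ℝ (fun q : Fin 4 → ℝ => q i) p :=
  (ContinuousLinearMap.proj i : ((_ : Fin 4) → ℝ) →L[ℝ] ℝ).differentiable.differentiableAt

lemma cos_div_tan (a b : ℝ) : Real.cos a / Real.tan b = Real.cos a * Real.cos b / Real.sin b := by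
  rw [Real.tan_eq_sin_div_cos, div_div_eq_mul_div]

lemma sin_div_tan (a b : ℝ) : Real.sin a / Real.tan b = Real.sin a * Real.cos b / Real.sin b := by
  rw [Real.tan_eq_sin_div_cos, div_div_eq_mul_div]

/-- pd of `u (q 3) * cos (q 2) / sin (q 2)` -/
lemma pd_u_cot {u : ℝ → ℝ} {u' : ℝ} {p : Fin 4 → ℝ} (hp : p ∈ Usph)
    (hud : Differentiable ℝ u) (hu : HasDerivAt u u' (p 3)) (μ : Fin 4) :
    pd (fun q => u (q 3) * Real.cos (q 2) / Real.sin (q 2)) μ p =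
      if μ = 2 then -(u (p 3)) / (Real.sin (p 2))^2
      else if μ = 3 then u' * Real.cos (p 2) / Real.sin (p 2) else 0 := by
  have hsin := sin2_ne hp
  have hda : DifferentiableAt ℝ
      (fun q : Fin 4 → ℝ => u (q 3) * Real.cos (q 2) / Real.sin (q 2)) p := by
    simp only [div_eq_mul_inv]
    exact (((hud (p 3)).comp p (diffAt_proj 3 p)).mul (diffAt_proj 2 p).cos).mul
      (((diffAt_proj 2 p).sin).inv hsin)
  rw [pd_eq_deriv hda]
  fin_cases μ
  · simp [Function.update_of_ne]
  · simp [Function.update_of_ne]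
  · simp only [Fin.reduceFinMk, Fin.isValue, Function.update_self,
      Function.update_of_ne (show (3:Fin 4) ≠ 2 by decide), Fin.reduceEq,
      if_true, if_false, reduceIte]
    have h1 : HasDerivAt (fun s : ℝ => u (p 3) * Real.cos s / Real.sin s)
        ((u (p 3) * -Real.sin (p 2) * Real.sin (p 2) - u (p 3) * Real.cos (p 2) * Real.cos (p 2))
          / Real.sin (p 2) ^ 2) (p 2) :=
      ((Real.hasDerivAt_cos (p 2)).const_mul (u (p 3))).div (Real.hasDerivAt_sin (p 2)) hsin
    rw [h1.deriv, div_eq_div_iff (by positivity) (by positivity)]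
    linear_combination (-(u (p 3)) * Real.sin (p 2)^2) * Real.sin_sq_add_cos_sq (p 2)
  · simp only [Fin.reduceFinMk, Fin.isValue, Function.update_self,
      Function.update_of_ne (show (2:Fin 4) ≠ 3 by decide), Fin.reduceEq,
      if_true, if_false, reduceIte]
    have h1 : HasDerivAt (fun s : ℝ => u s * Real.cos (p 2) / Real.sin (p 2))
        (u' * Real.cos (p 2) / Real.sin (p 2)) (p 3) :=
      (hu.mul_const (Real.cos (p 2))).div_const (Real.sin (p 2))
    rw [h1.deriv]

/-- pd of `u (q 3)` -/
lemma pd_u3 {u : ℝ → ℝ} {u' : ℝ} {p : Fin 4 → ℝ}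
    (hud : Differentiable ℝ u) (hu : HasDerivAt u u' (p 3)) (μ : Fin 4) :
    pd (fun q => u (q 3)) μ p = if μ = 3 then u' else 0 := by
  have hda : DifferentiableAt ℝ (fun q : Fin 4 → ℝ => u (q 3)) p :=
    (hud (p 3)).comp p (diffAt_proj 3 p)
  rw [pd_eq_deriv hda]
  fin_cases μ
  · simp [Function.update_of_ne]
  · simp [Function.update_of_ne]
  · simp [Function.update_of_ne]
  · simp only [Fin.reduceFinMk, Fin.isValue, Function.update_self, Fin.reduceEq, reduceIte]
    exact hu.deriv

lemma pd_sin3 (p : Fin 4 → ℝ) (μ : Fin 4) :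
    pd (fun q => Real.sin (q 3)) μ p = if μ = 3 then Real.cos (p 3) else 0 :=
  pd_u3 Real.differentiable_sin (Real.hasDerivAt_sin (p 3)) μ

lemma pd_negcos3 (p : Fin 4 → ℝ) (μ : Fin 4) :
    pd (fun q => -Real.cos (q 3)) μ p = if μ = 3 then Real.sin (p 3) else 0 := by
  have := pd_u3 (u := fun s => -Real.cos s) (u' := Real.sin (p 3)) (p := p)
    Real.differentiable_cos.neg (by have := (Real.hasDerivAt_cos (p 3)).neg; rwa [neg_neg] at this) μ
  simpa using this

lemma pdX03 {p : Fin 4 → ℝ} (hp : p ∈ Usph) (μ : Fin 4) :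
    pd (fun q => Real.cos (q 3) / Real.tan (q 2)) μ p =
      if μ = 2 then -Real.cos (p 3) / (Real.sin (p 2))^2
      else if μ = 3 then -Real.sin (p 3) * Real.cos (p 2) / Real.sin (p 2) else 0 := by
  have hfe : (fun q : Fin 4 → ℝ => Real.cos (q 3) / Real.tan (q 2))
      = fun q => Real.cos (q 3) * Real.cos (q 2) / Real.sin (q 2) := by
    funext q; exact cos_div_tan _ _
  rw [hfe]
  have := pd_u_cot hp Real.differentiable_cos (Real.hasDerivAt_cos (p 3)) μ
  simpa using this

lemma pdX13 {p : Fin 4 → ℝ} (hp : p ∈ Usph) (μ : Fin 4) :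
    pd (fun q => Real.sin (q 3) / Real.tan (q 2)) μ p =
      if μ = 2 then -Real.sin (p 3) / (Real.sin (p 2))^2
      else if μ = 3 then Real.cos (p 3) * Real.cos (p 2) / Real.sin (p 2) else 0 := by
  have hfe : (fun q : Fin 4 → ℝ => Real.sin (q 3) / Real.tan (q 2))
      = fun q => Real.sin (q 3) * Real.cos (q 2) / Real.sin (q 2) := by
    funext q; exact sin_div_tan _ _
  rw [hfe]
  have := pd_u_cot hp Real.differentiable_sin (Real.hasDerivAt_sin (p 3)) μ
  simpa using this

lemma pd23_tr {F : ℝ → ℝ → ℝ} {p : Fin 4 → ℝ}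
    (hd : DifferentiableAt ℝ (fun q : Fin 4 → ℝ => F (q 0) (q 1)) p) :
    pd (fun q : Fin 4 → ℝ => F (q 0) (q 1)) 2 p = 0 ∧
    pd (fun q : Fin 4 → ℝ => F (q 0) (q 1)) 3 p = 0 := by
  constructor <;> rw [pd_eq_deriv hd] <;> simp [Function.update_of_ne]

lemma pd23_tr_sin {F : ℝ → ℝ → ℝ} {p : Fin 4 → ℝ}
    (hd : DifferentiableAt ℝ (fun q : Fin 4 → ℝ => F (q 0) (q 1)) p) :
    pd (fun q : Fin 4 → ℝ => F (q 0) (q 1) * Real.sin (q 2)) 2 p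
        = F (p 0) (p 1) * Real.cos (p 2) ∧
    pd (fun q : Fin 4 → ℝ => F (q 0) (q 1) * Real.sin (q 2)) 3 p = 0 := by
  have hda : DifferentiableAt ℝ (fun q : Fin 4 → ℝ => F (q 0) (q 1) * Real.sin (q 2)) p :=
    hd.mul (diffAt_proj 2 p).sin
  constructor <;> rw [pd_eq_deriv hda]
  · simp only [Function.update_self,
      Function.update_of_ne (show (0:Fin 4) ≠ 2 by decide),
      Function.update_of_ne (show (1:Fin 4) ≠ 2 by decide)]
    exact (((Real.hasDerivAt_sin (p 2)).const_mul (F (p 0) (p 1)))).deriv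
  · simp [Function.update_of_ne]

set_option maxHeartbeats 1000000 in
/-- A differentiable vielbein satisfies (L_{X_I} h)^a_μ = f_I^î (λ̂_î)^a_b h^b_μ for the
    spherical symmetry generators with the spherically symmetric symmetry functions iff
    it has the block form with six functions A₁,…,A₆ of (t,r) alone. -/
theorem spherically_symmetric_vielbein
    (h : (Fin 4 → ℝ) → Matrix (Fin 4) (Fin 4) ℝ)
    (hdiff : ∀ a μ : Fin 4, ∀ p ∈ Usph, DifferentiableAt ℝ (fun q => h q a μ) p) :
    (∀ I : Fin 3, ∀ p ∈ Usph, ∀ a μ : Fin 4,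
      (∑ ν, Xsph I p ν * pd (fun q => h q a μ) ν p)
        + (∑ ν, pd (fun q => Xsph I q ν) μ p * h p a ν)
      = ∑ i, fsph I i p * ∑ b, lamIso i a b * h p b μ)
    ↔ (∃ A : Fin 6 → ℝ → ℝ → ℝ, ∀ p ∈ Usph,
        h p = !![A 0 (p 0) (p 1), A 1 (p 0) (p 1), 0, 0;
                 A 2 (p 0) (p 1), A 3 (p 0) (p 1), 0, 0;
                 0, 0, A 4 (p 0) (p 1), -(A 5 (p 0) (p 1)) * Real.sin (p 2);
                 0, 0, A 5 (p 0) (p 1), A 4 (p 0) (p 1) * Real.sin (p 2)]) := by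
  constructor
  · intro E
    -- φ-derivatives vanish
    have hpd3 : ∀ p ∈ Usph, ∀ a μ : Fin 4, pd (fun q => h q a μ) 3 p = 0 := by
      intro p hp a μ
      have e := E 2 p hp a μ
      simp [Xsph, fsph, Fin.sum_univ_four, Fin.sum_univ_three, pd_const] at e
      exact e
    -- h is independent of φ
    have hphi : ∀ p ∈ Usph, ∀ s : ℝ, ∀ a μ : Fin 4,
        h (Function.update p 3 s) a μ = h p a μ := by
      intro p hp s a μ
      have hmem : ∀ t : ℝ, Function.update p 3 t ∈ Usph := update3_mem hp
      have hder : ∀ t : ℝ, HasDerivAt (fun t => h (Function.update p 3 t) a μ) 0 t := by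
        intro t
        have hd := hasDerivAt_comp_update (hdiff a μ _ (hmem t))
        rwa [hpd3 _ (hmem t) a μ] at hd
      have hconst := is_const_of_deriv_eq_zero
        (fun t => (hder t).differentiableAt) (fun t => (hder t).deriv) s (p 3)
      simpa [Function.update_eq_self] using hconst
    -- θ-derivatives of the first three columns vanish (evaluated at φ = π/2)
    have hstep1 : ∀ p ∈ Usph, ∀ a : Fin 4, ∀ μ : Fin 4, μ = 0 ∨ μ = 1 ∨ μ = 2 →
        pd (fun q => h q a μ) 2 (Function.update p 3 (Real.pi/2)) = 0 := by
      intro p hp a μ hμ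
      have hpH : Function.update p 3 (Real.pi/2) ∈ Usph := update3_mem hp _
      have h3 : Function.update p 3 (Real.pi/2) 3 = Real.pi/2 := Function.update_self _ _ _
      have e := E 0 (Function.update p 3 (Real.pi/2)) hpH a μ
      rcases hμ with rfl | rfl | rfl <;>
      · simp [Xsph, fsph, lamIso, Fin.sum_univ_four, Fin.sum_univ_three, pd_const,
          hpd3 _ hpH, pdX03 hpH, pd_sin3, h3] at e
        linarith [e]
    -- algebraic facts from the equation at φ = 0
    have hfacts : ∀ p ∈ Usph,
        h p 2 0 = 0 ∧ h p 3 0 = 0 ∧ h p 2 1 = 0 ∧ h p 3 1 = 0 ∧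
        h p 0 3 = 0 ∧ h p 1 3 = 0 ∧ h p 0 2 = 0 ∧ h p 1 2 = 0 ∧
        h p 2 3 = -Real.sin (p 2) * h p 3 2 ∧ h p 3 3 = Real.sin (p 2) * h p 2 2 := by
      intro p hp
      have hp0 : Function.update p 3 0 ∈ Usph := update3_mem hp 0
      have h30 : Function.update p 3 0 3 = 0 := Function.update_self _ _ _
      have h20 : Function.update p 3 0 2 = p 2 := Function.update_of_ne (by decide) _ _
      have hph : ∀ a μ : Fin 4, h (Function.update p 3 0) a μ = h p a μ :=
        fun a μ => hphi p hp 0 a μ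
      have hs := sin2_ne hp
      have e20 := E 0 (Function.update p 3 0) hp0 2 0
      have e30 := E 0 (Function.update p 3 0) hp0 3 0
      have e21 := E 0 (Function.update p 3 0) hp0 2 1
      have e31 := E 0 (Function.update p 3 0) hp0 3 1
      have e02 := E 0 (Function.update p 3 0) hp0 0 2
      have e12 := E 0 (Function.update p 3 0) hp0 1 2
      have e03 := E 0 (Function.update p 3 0) hp0 0 3
      have e13 := E 0 (Function.update p 3 0) hp0 1 3
      have e22 := E 0 (Function.update p 3 0) hp0 2 2
      have e32 := E 0 (Function.update p 3 0) hp0 3 2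
      simp [Xsph, fsph, lamIso, Fin.sum_univ_four, Fin.sum_univ_three, pd_const,
        Matrix.vecHead, Matrix.vecTail, Function.comp,
        hpd3 _ hp0, pdX03 hp0, pd_sin3, h30, h20, hph] at e20 e30 e21 e31 e02 e12 e03 e13 e22 e32
      field_simp at e20 e30 e21 e31 e02 e12 e03 e13 e22 e32
      refine ⟨e30.resolve_left hs, e20.resolve_left hs, e31.resolve_left hs, e21.resolve_left hs,
        e02.resolve_left hs, e12.resolve_left hs, e03, e13, ?_, ?_⟩
      · exact mul_right_cancel₀ hs (by linear_combination (-Real.sin (p 2)) * e22)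
      · exact mul_right_cancel₀ hs (by linear_combination (-Real.sin (p 2)) * e32)
    -- h is independent of θ in the first three columns
    have htheta : ∀ p ∈ Usph, ∀ a : Fin 4, ∀ μ : Fin 4, μ = 0 ∨ μ = 1 ∨ μ = 2 →
        h p a μ = h (Function.update p 2 (Real.pi/2)) a μ := by
      intro p hp a μ hμ
      have hpi := Real.pi_pos
      have hhalf : Real.pi/2 ∈ Set.Ioo 0 Real.pi :=
        ⟨Real.pi_div_two_pos, by linarith⟩
      have hq02 : Function.update p 3 (Real.pi/2) 2 = p 2 :=
        Function.update_of_ne (by decide) _ _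
      have hder : ∀ t ∈ Set.Ioo 0 Real.pi,
          HasDerivAt (fun t => h (Function.update (Function.update p 3 (Real.pi/2)) 2 t) a μ)
            0 t := by
        intro t ht
        have hmem : Function.update (Function.update p 3 (Real.pi/2)) 2 t ∈ Usph :=
          update2_mem _ ht.1 ht.2
        have hd := hasDerivAt_comp_update (hdiff a μ _ hmem)
        have hcomm : Function.update (Function.update p 3 (Real.pi/2)) 2 t
            = Function.update (Function.update p 2 t) 3 (Real.pi/2) :=
          Function.update_comm (by decide) _ _ _
        have hz : pd (fun q => h q a μ) 2
            (Function.update (Function.update p 3 (Real.pi/2)) 2 t) = 0 := by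
          rw [hcomm]
          exact hstep1 _ (update2_mem p ht.1 ht.2) a μ hμ
        rwa [hz] at hd
      have hc := const_of_deriv_zero_Ioo
        (fun t ht => (hder t ht).differentiableAt) (fun t ht => (hder t ht).deriv)
        (show p 2 ∈ Set.Ioo 0 Real.pi from ⟨hp.1, hp.2⟩) hhalf
      have h1 : Function.update (Function.update p 3 (Real.pi/2)) 2 (p 2)
          = Function.update p 3 (Real.pi/2) := by
        conv_lhs => rw [← hq02]
        exact Function.update_eq_self _ _
      have h2 : Function.update (Function.update p 3 (Real.pi/2)) 2 (Real.pi/2)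
          = Function.update (Function.update p 2 (Real.pi/2)) 3 (Real.pi/2) :=
        Function.update_comm (by decide) _ _ _
      rw [h1, h2] at hc
      rw [← hphi p hp (Real.pi/2) a μ, hc,
        hphi _ (update2_mem p Real.pi_div_two_pos (by linarith)) (Real.pi/2) a μ]
    -- conclusion
    refine ⟨![fun t r => h ![t,r,Real.pi/2,Real.pi/2] 0 0,
              fun t r => h ![t,r,Real.pi/2,Real.pi/2] 0 1,
              fun t r => h ![t,r,Real.pi/2,Real.pi/2] 1 0,
              fun t r => h ![t,r,Real.pi/2,Real.pi/2] 1 1,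
              fun t r => h ![t,r,Real.pi/2,Real.pi/2] 2 2,
              fun t r => h ![t,r,Real.pi/2,Real.pi/2] 3 2], ?_⟩
    intro p hp
    have hpi := Real.pi_pos
    have hcp : Function.update (Function.update p 2 (Real.pi/2)) 3 (Real.pi/2)
        = ![p 0, p 1, Real.pi/2, Real.pi/2] := by
      funext j
      fin_cases j <;>
        simp [Function.update_self, Function.update_of_ne, Matrix.cons_val_zero,
          Matrix.cons_val_one, Matrix.head_cons]
    have hchain : ∀ a μ : Fin 4, μ = 0 ∨ μ = 1 ∨ μ = 2 →
        h p a μ = h ![p 0, p 1, Real.pi/2, Real.pi/2] a μ := by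
      intro a μ hμ
      rw [htheta p hp a μ hμ,
        ← hphi _ (update2_mem p Real.pi_div_two_pos (by linarith)) (Real.pi/2) a μ, hcp]
    obtain ⟨f1, f2, f3, f4, f5, f6, f7, f8, f9, f10⟩ := hfacts p hp
    have c00 := hchain 0 0 (Or.inl rfl)
    have c01 := hchain 0 1 (Or.inr (Or.inl rfl))
    have c10 := hchain 1 0 (Or.inl rfl)
    have c11 := hchain 1 1 (Or.inr (Or.inl rfl))
    have c22 := hchain 2 2 (Or.inr (Or.inr rfl))
    have c32 := hchain 3 2 (Or.inr (Or.inr rfl))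
    ext a μ
    fin_cases a <;> fin_cases μ <;>
      simp only [Matrix.cons_val', Matrix.cons_val_zero, Matrix.empty_val',
        Matrix.cons_val_fin_one, Matrix.cons_val_one, Matrix.head_cons,
        Matrix.head_fin_const, Matrix.cons_val_two, Matrix.tail_cons,
        Matrix.cons_val_three, Fin.isValue]
    · exact c00
    · exact c01
    · exact f7
    · exact f5
    · exact c10
    · exact c11
    · exact f8
    · exact f6
    · exact f1
    · exact f3
    · exact c22
    · show h p 2 3 = -(h ![p 0, p 1, Real.pi/2, Real.pi/2] 3 2) * Real.sin (p 2)
      rw [f9, c32]; ring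
    · exact f2
    · exact f4
    · exact c32
    · show h p 3 3 = h ![p 0, p 1, Real.pi/2, Real.pi/2] 2 2 * Real.sin (p 2)
      rw [f10, c22]; ring
  · rintro ⟨A, hA⟩ I p hp a μ
    have hU := usph_nhds hp
    have hs := sin2_ne hp
    have he00 : (fun q => h q 0 0) =ᶠ[nhds p] (fun q : Fin 4 → ℝ => A 0 (q 0) (q 1)) :=
      Filter.eventuallyEq_of_mem hU (fun q hq => by rw [hA q hq]; simp [Matrix.vecHead, Matrix.vecTail])
    have hd00 : DifferentiableAt ℝ (fun q : Fin 4 → ℝ => A 0 (q 0) (q 1)) p :=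
      he00.differentiableAt_iff.mp (hdiff 0 0 p hp)
    have k00_2 : pd (fun q => h q 0 0) 2 p = 0 := by
      rw [pd_congr _ he00]; exact (pd23_tr hd00).1
    have k00_3 : pd (fun q => h q 0 0) 3 p = 0 := by
      rw [pd_congr _ he00]; exact (pd23_tr hd00).2
    have he01 : (fun q => h q 0 1) =ᶠ[nhds p] (fun q : Fin 4 → ℝ => A 1 (q 0) (q 1)) :=
      Filter.eventuallyEq_of_mem hU (fun q hq => by rw [hA q hq]; simp [Matrix.vecHead, Matrix.vecTail])
    have hd01 : DifferentiableAt ℝ (fun q : Fin 4 → ℝ => A 1 (q 0) (q 1)) p :=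
      he01.differentiableAt_iff.mp (hdiff 0 1 p hp)
    have k01_2 : pd (fun q => h q 0 1) 2 p = 0 := by
      rw [pd_congr _ he01]; exact (pd23_tr hd01).1
    have k01_3 : pd (fun q => h q 0 1) 3 p = 0 := by
      rw [pd_congr _ he01]; exact (pd23_tr hd01).2
    have he10 : (fun q => h q 1 0) =ᶠ[nhds p] (fun q : Fin 4 → ℝ => A 2 (q 0) (q 1)) :=
      Filter.eventuallyEq_of_mem hU (fun q hq => by rw [hA q hq]; simp [Matrix.vecHead, Matrix.vecTail])
    have hd10 : DifferentiableAt ℝ (fun q : Fin 4 → ℝ => A 2 (q 0) (q 1)) p :=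
      he10.differentiableAt_iff.mp (hdiff 1 0 p hp)
    have k10_2 : pd (fun q => h q 1 0) 2 p = 0 := by
      rw [pd_congr _ he10]; exact (pd23_tr hd10).1
    have k10_3 : pd (fun q => h q 1 0) 3 p = 0 := by
      rw [pd_congr _ he10]; exact (pd23_tr hd10).2
    have he11 : (fun q => h q 1 1) =ᶠ[nhds p] (fun q : Fin 4 → ℝ => A 3 (q 0) (q 1)) :=
      Filter.eventuallyEq_of_mem hU (fun q hq => by rw [hA q hq]; simp [Matrix.vecHead, Matrix.vecTail])
    have hd11 : DifferentiableAt ℝ (fun q : Fin 4 → ℝ => A 3 (q 0) (q 1)) p :=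
      he11.differentiableAt_iff.mp (hdiff 1 1 p hp)
    have k11_2 : pd (fun q => h q 1 1) 2 p = 0 := by
      rw [pd_congr _ he11]; exact (pd23_tr hd11).1
    have k11_3 : pd (fun q => h q 1 1) 3 p = 0 := by
      rw [pd_congr _ he11]; exact (pd23_tr hd11).2
    have he22 : (fun q => h q 2 2) =ᶠ[nhds p] (fun q : Fin 4 → ℝ => A 4 (q 0) (q 1)) :=
      Filter.eventuallyEq_of_mem hU (fun q hq => by rw [hA q hq]; simp [Matrix.vecHead, Matrix.vecTail])
    have hd22 : DifferentiableAt ℝ (fun q : Fin 4 → ℝ => A 4 (q 0) (q 1)) p :=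
      he22.differentiableAt_iff.mp (hdiff 2 2 p hp)
    have k22_2 : pd (fun q => h q 2 2) 2 p = 0 := by
      rw [pd_congr _ he22]; exact (pd23_tr hd22).1
    have k22_3 : pd (fun q => h q 2 2) 3 p = 0 := by
      rw [pd_congr _ he22]; exact (pd23_tr hd22).2
    have he32 : (fun q => h q 3 2) =ᶠ[nhds p] (fun q : Fin 4 → ℝ => A 5 (q 0) (q 1)) :=
      Filter.eventuallyEq_of_mem hU (fun q hq => by rw [hA q hq]; simp [Matrix.vecHead, Matrix.vecTail])
    have hd32 : DifferentiableAt ℝ (fun q : Fin 4 → ℝ => A 5 (q 0) (q 1)) p :=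
      he32.differentiableAt_iff.mp (hdiff 3 2 p hp)
    have k32_2 : pd (fun q => h q 3 2) 2 p = 0 := by
      rw [pd_congr _ he32]; exact (pd23_tr hd32).1
    have k32_3 : pd (fun q => h q 3 2) 3 p = 0 := by
      rw [pd_congr _ he32]; exact (pd23_tr hd32).2
    have hz02 : (fun q => h q 0 2) =ᶠ[nhds p] (fun _ : Fin 4 → ℝ => (0:ℝ)) :=
      Filter.eventuallyEq_of_mem hU (fun q hq => by rw [hA q hq]; simp [Matrix.vecHead, Matrix.vecTail])
    have k02_2 : pd (fun q => h q 0 2) 2 p = 0 := by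
      rw [pd_congr _ hz02]; exact pd_const 0 2 p
    have k02_3 : pd (fun q => h q 0 2) 3 p = 0 := by
      rw [pd_congr _ hz02]; exact pd_const 0 3 p
    have hz03 : (fun q => h q 0 3) =ᶠ[nhds p] (fun _ : Fin 4 → ℝ => (0:ℝ)) :=
      Filter.eventuallyEq_of_mem hU (fun q hq => by rw [hA q hq]; simp [Matrix.vecHead, Matrix.vecTail])
    have k03_2 : pd (fun q => h q 0 3) 2 p = 0 := by
      rw [pd_congr _ hz03]; exact pd_const 0 2 p
    have k03_3 : pd (fun q => h q 0 3) 3 p = 0 := by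
      rw [pd_congr _ hz03]; exact pd_const 0 3 p
    have hz12 : (fun q => h q 1 2) =ᶠ[nhds p] (fun _ : Fin 4 → ℝ => (0:ℝ)) :=
      Filter.eventuallyEq_of_mem hU (fun q hq => by rw [hA q hq]; simp [Matrix.vecHead, Matrix.vecTail])
    have k12_2 : pd (fun q => h q 1 2) 2 p = 0 := by
      rw [pd_congr _ hz12]; exact pd_const 0 2 p
    have k12_3 : pd (fun q => h q 1 2) 3 p = 0 := by
      rw [pd_congr _ hz12]; exact pd_const 0 3 p
    have hz13 : (fun q => h q 1 3) =ᶠ[nhds p] (fun _ : Fin 4 → ℝ => (0:ℝ)) :=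
      Filter.eventuallyEq_of_mem hU (fun q hq => by rw [hA q hq]; simp [Matrix.vecHead, Matrix.vecTail])
    have k13_2 : pd (fun q => h q 1 3) 2 p = 0 := by
      rw [pd_congr _ hz13]; exact pd_const 0 2 p
    have k13_3 : pd (fun q => h q 1 3) 3 p = 0 := by
      rw [pd_congr _ hz13]; exact pd_const 0 3 p
    have hz20 : (fun q => h q 2 0) =ᶠ[nhds p] (fun _ : Fin 4 → ℝ => (0:ℝ)) :=
      Filter.eventuallyEq_of_mem hU (fun q hq => by rw [hA q hq]; simp [Matrix.vecHead, Matrix.vecTail])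
    have k20_2 : pd (fun q => h q 2 0) 2 p = 0 := by
      rw [pd_congr _ hz20]; exact pd_const 0 2 p
    have k20_3 : pd (fun q => h q 2 0) 3 p = 0 := by
      rw [pd_congr _ hz20]; exact pd_const 0 3 p
    have hz21 : (fun q => h q 2 1) =ᶠ[nhds p] (fun _ : Fin 4 → ℝ => (0:ℝ)) :=
      Filter.eventuallyEq_of_mem hU (fun q hq => by rw [hA q hq]; simp [Matrix.vecHead, Matrix.vecTail])
    have k21_2 : pd (fun q => h q 2 1) 2 p = 0 := by
      rw [pd_congr _ hz21]; exact pd_const 0 2 p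
    have k21_3 : pd (fun q => h q 2 1) 3 p = 0 := by
      rw [pd_congr _ hz21]; exact pd_const 0 3 p
    have hz30 : (fun q => h q 3 0) =ᶠ[nhds p] (fun _ : Fin 4 → ℝ => (0:ℝ)) :=
      Filter.eventuallyEq_of_mem hU (fun q hq => by rw [hA q hq]; simp [Matrix.vecHead, Matrix.vecTail])
    have k30_2 : pd (fun q => h q 3 0) 2 p = 0 := by
      rw [pd_congr _ hz30]; exact pd_const 0 2 p
    have k30_3 : pd (fun q => h q 3 0) 3 p = 0 := by
      rw [pd_congr _ hz30]; exact pd_const 0 3 p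
    have hz31 : (fun q => h q 3 1) =ᶠ[nhds p] (fun _ : Fin 4 → ℝ => (0:ℝ)) :=
      Filter.eventuallyEq_of_mem hU (fun q hq => by rw [hA q hq]; simp [Matrix.vecHead, Matrix.vecTail])
    have k31_2 : pd (fun q => h q 3 1) 2 p = 0 := by
      rw [pd_congr _ hz31]; exact pd_const 0 2 p
    have k31_3 : pd (fun q => h q 3 1) 3 p = 0 := by
      rw [pd_congr _ hz31]; exact pd_const 0 3 p
    have he23 : (fun q => h q 2 3) =ᶠ[nhds p]
        (fun q : Fin 4 → ℝ => -A 5 (q 0) (q 1) * Real.sin (q 2)) :=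
      Filter.eventuallyEq_of_mem hU (fun q hq => by rw [hA q hq]; simp [Matrix.vecHead, Matrix.vecTail])
    have k23_2 : pd (fun q => h q 2 3) 2 p = -A 5 (p 0) (p 1) * Real.cos (p 2) := by
      rw [pd_congr _ he23]
      exact (pd23_tr_sin (F := fun t r => -A 5 t r) hd32.neg).1
    have k23_3 : pd (fun q => h q 2 3) 3 p = 0 := by
      rw [pd_congr _ he23]
      exact (pd23_tr_sin (F := fun t r => -A 5 t r) hd32.neg).2
    have he33 : (fun q => h q 3 3) =ᶠ[nhds p]
        (fun q : Fin 4 → ℝ => A 4 (q 0) (q 1) * Real.sin (q 2)) :=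
      Filter.eventuallyEq_of_mem hU (fun q hq => by rw [hA q hq]; simp [Matrix.vecHead, Matrix.vecTail])
    have k33_2 : pd (fun q => h q 3 3) 2 p = A 4 (p 0) (p 1) * Real.cos (p 2) := by
      rw [pd_congr _ he33]
      exact (pd23_tr_sin (F := fun t r => A 4 t r) hd22).1
    have k33_3 : pd (fun q => h q 3 3) 3 p = 0 := by
      rw [pd_congr _ he33]
      exact (pd23_tr_sin (F := fun t r => A 4 t r) hd22).2
    have v00 : h p 0 0 = A 0 (p 0) (p 1) := by
      rw [hA p hp]; simp [Matrix.vecHead, Matrix.vecTail]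
    have v01 : h p 0 1 = A 1 (p 0) (p 1) := by
      rw [hA p hp]; simp [Matrix.vecHead, Matrix.vecTail]
    have v10 : h p 1 0 = A 2 (p 0) (p 1) := by
      rw [hA p hp]; simp [Matrix.vecHead, Matrix.vecTail]
    have v11 : h p 1 1 = A 3 (p 0) (p 1) := by
      rw [hA p hp]; simp [Matrix.vecHead, Matrix.vecTail]
    have v22 : h p 2 2 = A 4 (p 0) (p 1) := by
      rw [hA p hp]; simp [Matrix.vecHead, Matrix.vecTail]
    have v32 : h p 3 2 = A 5 (p 0) (p 1) := by
      rw [hA p hp]; simp [Matrix.vecHead, Matrix.vecTail]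
    have v02 : h p 0 2 = 0 := by
      rw [hA p hp]; simp [Matrix.vecHead, Matrix.vecTail]
    have v03 : h p 0 3 = 0 := by
      rw [hA p hp]; simp [Matrix.vecHead, Matrix.vecTail]
    have v12 : h p 1 2 = 0 := by
      rw [hA p hp]; simp [Matrix.vecHead, Matrix.vecTail]
    have v13 : h p 1 3 = 0 := by
      rw [hA p hp]; simp [Matrix.vecHead, Matrix.vecTail]
    have v20 : h p 2 0 = 0 := by
      rw [hA p hp]; simp [Matrix.vecHead, Matrix.vecTail]
    have v21 : h p 2 1 = 0 := by
      rw [hA p hp]; simp [Matrix.vecHead, Matrix.vecTail]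
    have v30 : h p 3 0 = 0 := by
      rw [hA p hp]; simp [Matrix.vecHead, Matrix.vecTail]
    have v31 : h p 3 1 = 0 := by
      rw [hA p hp]; simp [Matrix.vecHead, Matrix.vecTail]
    have v23 : h p 2 3 = -A 5 (p 0) (p 1) * Real.sin (p 2) := by
      rw [hA p hp]; simp [Matrix.vecHead, Matrix.vecTail]
    have v33 : h p 3 3 = A 4 (p 0) (p 1) * Real.sin (p 2) := by
      rw [hA p hp]; simp [Matrix.vecHead, Matrix.vecTail]
    rcases (show I = 0 ∨ I = 1 ∨ I = 2 by omega) with rfl | rfl | rfl <;>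
    rcases (show a = 0 ∨ a = 1 ∨ a = 2 ∨ a = 3 by omega) with rfl | rfl | rfl | rfl <;>
    rcases (show μ = 0 ∨ μ = 1 ∨ μ = 2 ∨ μ = 3 by omega) with rfl | rfl | rfl | rfl
    all_goals (
      simp [Xsph, fsph, lamIso, Fin.sum_univ_four, Fin.sum_univ_three,
        Matrix.vecHead, Matrix.vecTail, pd_const, pd_sin3, pd_negcos3, pdX03 hp, pdX13 hp,
      k00_2, k00_3, k01_2, k01_3, k10_2, k10_3, k11_2, k11_3, k22_2, k22_3, k32_2, k32_3, k02_2, k02_3, k03_2, k03_3, k12_2, k12_3, k13_2, k13_3, k20_2, k20_3, k21_2, k21_3, k30_2, k30_3, k31_2, k31_3, k23_2, k23_3, k33_2, k33_3,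
        v00, v01, v10, v11, v22, v32, v02, v03, v12, v13, v20, v21, v30, v31, v23, v33])
    all_goals field_simp
    all_goals ring
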